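/- arXiv:1509.00283 — 3 statements merged into one kernel-verified Lean document; each statement's English description precedes it below -/
import Mathlib

section
/- Let k, k₁ be natural numbers with k ≤ K and k₁ ≤ M - 1 - K, where M > K. Then (2π/M) · Σ_{s=1}^{M} Y_{(k₁,ℓ₁)}(2πs/M) · Y_{(k,ℓ)}(2πs/M) = δ_{k,k₁} δ_{ℓ,ℓ₁}, i.e., the trapezoidal sum of the product of the two circular harmonics equals the Kronecker delta. -/
open Real

/-- The orthonormalized circular harmonics. -/
noncomputable def Y : ℕ → ℕ → ℝ → ℝ
  | 0, _, _ => 1 / Real.sqrt (2 * π)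
  | k, 1, φ => Real.cos (k * φ) / Real.sqrt π
  | k, _, φ => Real.sin (k * φ) / Real.sqrt π

/-- `a_k`: the number of circular harmonics of degree `k`. -/
def aa (k : ℕ) : ℕ := if k = 0 then 1 else 2


lemma exp_sum_zero (M n : ℕ) (h0 : 0 < n) (hnM : n < M) :
    ∑ s ∈ Finset.range M, Complex.exp ((((n:ℝ) * (2*π*(s+1)/M)) : ℝ) * Complex.I) = 0 := by
  have hM : (0:ℝ) < M := by exact_mod_cast h0.trans hnM
  set z : ℂ := Complex.exp ((2*π*n/M : ℝ) * Complex.I) with hz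
  have hterm : ∀ s : ℕ, Complex.exp ((((n:ℝ) * (2*π*(s+1)/M)) : ℝ) * Complex.I) = z ^ (s+1) := by
    intro s
    rw [hz, ← Complex.exp_nat_mul]
    congr 1
    push_cast
    field_simp
  have hzM : z ^ M = 1 := by
    rw [hz, ← Complex.exp_nat_mul]
    have hMC : (M:ℂ) ≠ 0 := by exact_mod_cast hM.ne'
    have : (M:ℂ) * (((2*π*n/M : ℝ)) * Complex.I) = (n:ℤ) * (2*π*Complex.I) := by
      push_cast
      field_simp
    rw [this, Complex.exp_int_mul_two_pi_mul_I]
  have hz1 : z ≠ 1 := by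
    rw [hz, Ne, Complex.exp_eq_one_iff]
    rintro ⟨m, hm⟩
    have him := congrArg Complex.im hm
    simp [Complex.mul_im] at him
    -- him : 2*π*n/M = m * (2*π)
    have hπ := Real.pi_pos
    have : (n:ℝ) = m * M := by
      field_simp at him
      nlinarith [him]
    have : (n:ℤ) = m * M := by exact_mod_cast this
    rcases le_or_gt m 0 with hm0 | hm0
    · have : (n:ℤ) ≤ 0 := by nlinarith [Int.natCast_nonneg M]
      omega
    · have h1 : (1:ℤ) ≤ m := hm0
      have : (M:ℤ) ≤ n := by nlinarith [Int.natCast_nonneg M]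
      omega
  calc ∑ s ∈ Finset.range M, Complex.exp ((((n:ℝ) * (2*π*(s+1)/M)) : ℝ) * Complex.I)
      = ∑ s ∈ Finset.range M, z * z ^ s := by
        refine Finset.sum_congr rfl fun s _ => ?_
        rw [hterm s, pow_succ, mul_comm]
    _ = z * ((z ^ M - 1) / (z - 1)) := by rw [← Finset.mul_sum, geom_sum_eq hz1]
    _ = 0 := by rw [hzM]; simp

lemma sum_cos_zero (M n : ℕ) (h0 : 0 < n) (hnM : n < M) :
    ∑ s ∈ Finset.range M, Real.cos ((n:ℝ) * (2*π*(s+1)/M)) = 0 := by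
  have h : ∑ s ∈ Finset.range M, Real.cos ((n:ℝ) * (2*π*(s+1)/M))
      = (∑ s ∈ Finset.range M, Complex.exp ((((n:ℝ) * (2*π*(s+1)/M)) : ℝ) * Complex.I)).re := by
    rw [Complex.re_sum]
    exact Finset.sum_congr rfl fun s _ => (Complex.exp_ofReal_mul_I_re _).symm
  rw [h, exp_sum_zero M n h0 hnM, Complex.zero_re]

lemma sum_sin_zero (M n : ℕ) (hnM : n < M) :
    ∑ s ∈ Finset.range M, Real.sin ((n:ℝ) * (2*π*(s+1)/M)) = 0 := by
  rcases Nat.eq_zero_or_pos n with rfl | h0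
  · simp
  · have h : ∑ s ∈ Finset.range M, Real.sin ((n:ℝ) * (2*π*(s+1)/M))
        = (∑ s ∈ Finset.range M, Complex.exp ((((n:ℝ) * (2*π*(s+1)/M)) : ℝ) * Complex.I)).im := by
      rw [Complex.im_sum]
      exact Finset.sum_congr rfl fun s _ => (Complex.exp_ofReal_mul_I_im _).symm
    rw [h, exp_sum_zero M n h0 hnM, Complex.zero_im]

lemma sum_cos_diff (M a b : ℕ) (haM : a < M) (hbM : b < M) :
    ∑ s ∈ Finset.range M, Real.cos ((a:ℝ) * (2*π*(s+1)/M) - (b:ℝ) * (2*π*(s+1)/M))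
      = if a = b then (M:ℝ) else 0 := by
  rcases lt_trichotomy a b with h | rfl | h
  · rw [if_neg h.ne]
    have := sum_cos_zero M (b - a) (by omega) (by omega)
    rw [← this]
    refine Finset.sum_congr rfl fun s _ => ?_
    rw [← Real.cos_neg]
    congr 1
    have : ((b - a : ℕ) : ℝ) = (b:ℝ) - a := by
      push_cast [Nat.cast_sub h.le]; ring
    rw [this]; ring
  · simp
  · rw [if_neg h.ne']
    have := sum_cos_zero M (a - b) (by omega) (by omega)
    rw [← this]
    refine Finset.sum_congr rfl fun s _ => ?_
    congr 1
    have : ((a - b : ℕ) : ℝ) = (a:ℝ) - b := by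
      push_cast [Nat.cast_sub h.le]; ring
    rw [this]; ring

lemma sum_sin_diff (M a b : ℕ) (haM : a < M) (hbM : b < M) :
    ∑ s ∈ Finset.range M, Real.sin ((a:ℝ) * (2*π*(s+1)/M) - (b:ℝ) * (2*π*(s+1)/M)) = 0 := by
  rcases lt_trichotomy a b with h | rfl | h
  · have := sum_sin_zero M (b - a) (by omega)
    rw [← neg_zero, ← this, ← Finset.sum_neg_distrib]
    refine Finset.sum_congr rfl fun s _ => ?_
    rw [← Real.sin_neg]
    congr 1
    have : ((b - a : ℕ) : ℝ) = (b:ℝ) - a := by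
      push_cast [Nat.cast_sub h.le]; ring
    rw [this]; ring
  · simp
  · have := sum_sin_zero M (a - b) (by omega)
    rw [← this]
    refine Finset.sum_congr rfl fun s _ => ?_
    congr 1
    have : ((a - b : ℕ) : ℝ) = (a:ℝ) - b := by
      push_cast [Nat.cast_sub h.le]; ring
    rw [this]; ring

lemma Scc (M a b : ℕ) (ha : 0 < a) (hb : 0 < b) (hab : a + b < M) :
    ∑ s ∈ Finset.range M, Real.cos ((a:ℝ) * (2*π*(s+1)/M)) * Real.cos ((b:ℝ) * (2*π*(s+1)/M))
      = if a = b then (M:ℝ)/2 else 0 := by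
  calc ∑ s ∈ Finset.range M, Real.cos ((a:ℝ) * (2*π*(s+1)/M)) * Real.cos ((b:ℝ) * (2*π*(s+1)/M))
      = ∑ s ∈ Finset.range M, ((Real.cos (((a+b:ℕ):ℝ) * (2*π*(s+1)/M))
          + Real.cos ((a:ℝ) * (2*π*(s+1)/M) - (b:ℝ) * (2*π*(s+1)/M)))) / 2 := by
        refine Finset.sum_congr rfl fun s _ => ?_
        have h : ((a+b:ℕ):ℝ) * (2*π*(s+1)/M) = (a:ℝ) * (2*π*(s+1)/M) + (b:ℝ) * (2*π*(s+1)/M) := by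
          push_cast; ring
        rw [h, Real.cos_add, Real.cos_sub]; ring
    _ = (∑ s ∈ Finset.range M, Real.cos (((a+b:ℕ):ℝ) * (2*π*(s+1)/M))
          + ∑ s ∈ Finset.range M, Real.cos ((a:ℝ) * (2*π*(s+1)/M) - (b:ℝ) * (2*π*(s+1)/M))) / 2 := by
        rw [← Finset.sum_div, Finset.sum_add_distrib]
    _ = if a = b then (M:ℝ)/2 else 0 := by
        rw [sum_cos_zero M (a+b) (by omega) hab, sum_cos_diff M a b (by omega) (by omega)]
        split <;> simp

lemma Sss (M a b : ℕ) (ha : 0 < a) (hb : 0 < b) (hab : a + b < M) :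
    ∑ s ∈ Finset.range M, Real.sin ((a:ℝ) * (2*π*(s+1)/M)) * Real.sin ((b:ℝ) * (2*π*(s+1)/M))
      = if a = b then (M:ℝ)/2 else 0 := by
  calc ∑ s ∈ Finset.range M, Real.sin ((a:ℝ) * (2*π*(s+1)/M)) * Real.sin ((b:ℝ) * (2*π*(s+1)/M))
      = ∑ s ∈ Finset.range M, ((Real.cos ((a:ℝ) * (2*π*(s+1)/M) - (b:ℝ) * (2*π*(s+1)/M))
          - Real.cos (((a+b:ℕ):ℝ) * (2*π*(s+1)/M)))) / 2 := by
        refine Finset.sum_congr rfl fun s _ => ?_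
        have h : ((a+b:ℕ):ℝ) * (2*π*(s+1)/M) = (a:ℝ) * (2*π*(s+1)/M) + (b:ℝ) * (2*π*(s+1)/M) := by
          push_cast; ring
        rw [h, Real.cos_add, Real.cos_sub]; ring
    _ = (∑ s ∈ Finset.range M, Real.cos ((a:ℝ) * (2*π*(s+1)/M) - (b:ℝ) * (2*π*(s+1)/M))
          - ∑ s ∈ Finset.range M, Real.cos (((a+b:ℕ):ℝ) * (2*π*(s+1)/M))) / 2 := by
        rw [← Finset.sum_div, Finset.sum_sub_distrib]
    _ = if a = b then (M:ℝ)/2 else 0 := by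
        rw [sum_cos_zero M (a+b) (by omega) hab, sum_cos_diff M a b (by omega) (by omega)]
        split <;> simp

lemma Ssc (M a b : ℕ) (hab : a + b < M) :
    ∑ s ∈ Finset.range M, Real.sin ((a:ℝ) * (2*π*(s+1)/M)) * Real.cos ((b:ℝ) * (2*π*(s+1)/M))
      = 0 := by
  calc ∑ s ∈ Finset.range M, Real.sin ((a:ℝ) * (2*π*(s+1)/M)) * Real.cos ((b:ℝ) * (2*π*(s+1)/M))
      = ∑ s ∈ Finset.range M, ((Real.sin (((a+b:ℕ):ℝ) * (2*π*(s+1)/M))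
          + Real.sin ((a:ℝ) * (2*π*(s+1)/M) - (b:ℝ) * (2*π*(s+1)/M)))) / 2 := by
        refine Finset.sum_congr rfl fun s _ => ?_
        have h : ((a+b:ℕ):ℝ) * (2*π*(s+1)/M) = (a:ℝ) * (2*π*(s+1)/M) + (b:ℝ) * (2*π*(s+1)/M) := by
          push_cast; ring
        rw [h, Real.sin_add, Real.sin_sub]; ring
    _ = (∑ s ∈ Finset.range M, Real.sin (((a+b:ℕ):ℝ) * (2*π*(s+1)/M))
          + ∑ s ∈ Finset.range M, Real.sin ((a:ℝ) * (2*π*(s+1)/M) - (b:ℝ) * (2*π*(s+1)/M))) / 2 := by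
        rw [← Finset.sum_div, Finset.sum_add_distrib]
    _ = 0 := by
        rw [sum_sin_zero M (a+b) hab, sum_sin_diff M a b (by omega) (by omega)]
        norm_num

lemma Y_zero (l : ℕ) (φ : ℝ) : Y 0 l φ = 1 / Real.sqrt (2*π) := by
  rcases l with _ | _ | l <;> rfl
lemma Y_succ_one (k : ℕ) (φ : ℝ) : Y (k+1) 1 φ = Real.cos ((k+1 : ℕ) * φ) / Real.sqrt π := rfl
lemma Y_succ_two (k : ℕ) (φ : ℝ) : Y (k+1) 2 φ = Real.sin ((k+1 : ℕ) * φ) / Real.sqrt π := rfl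


/-- Discrete orthogonality: the trapezoidal sum of the product of two circular
harmonics of degrees `k ≤ K` and `k₁ ≤ M - 1 - K` (with `M > K`) is the Kronecker delta. -/
theorem trapezoidal_orthogonality (M K k k₁ ℓ ℓ₁ : ℕ) (hMK : K < M)
    (hk : k ≤ K) (hk₁ : k₁ ≤ M - 1 - K)
    (hℓ : 1 ≤ ℓ ∧ ℓ ≤ aa k) (hℓ₁ : 1 ≤ ℓ₁ ∧ ℓ₁ ≤ aa k₁) :
    (2 * π / M) * ∑ s ∈ Finset.range M,
        Y k₁ ℓ₁ (2 * π * (s + 1) / M) * Y k ℓ (2 * π * (s + 1) / M)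
      = if k = k₁ ∧ ℓ = ℓ₁ then 1 else 0 := by
  obtain ⟨hl1, hl2⟩ := hℓ
  obtain ⟨hl1', hl2'⟩ := hℓ₁
  have hπ := Real.pi_pos
  have hMpos : 0 < M := by omega
  have hM0 : (M:ℝ) ≠ 0 := Nat.cast_ne_zero.mpr hMpos.ne'
  have hMr : (0:ℝ) < M := by exact_mod_cast hMpos
  have hsq2 : Real.sqrt (2*π) * Real.sqrt (2*π) = 2*π := Real.mul_self_sqrt (by positivity)
  have hsqπ : Real.sqrt π * Real.sqrt π = π := Real.mul_self_sqrt hπ.le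
  rcases k with _ | m
  · -- k = 0
    have hl : ℓ = 1 := by simp [aa] at hl2; omega
    subst hl
    rcases k₁ with _ | n
    · -- k₁ = 0
      have hl' : ℓ₁ = 1 := by simp [aa] at hl2'; omega
      subst hl'
      simp only [Y_zero]
      rw [Finset.sum_const, Finset.card_range, nsmul_eq_mul]
      simp only [and_self, if_true]
      have h1 : (1/Real.sqrt (2*π)) * (1/Real.sqrt (2*π)) = 1/(2*π) := by
        rw [div_mul_div_comm, one_mul, hsq2]
      rw [h1]
      field_simp
    · -- k₁ = n+1, k = 0
      have hnM : n + 1 < M := by omega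
      rw [if_neg (by simp)]
      have hl' : ℓ₁ = 1 ∨ ℓ₁ = 2 := by simp [aa] at hl2'; omega
      rcases hl' with rfl | rfl
      · simp only [Y_succ_one, Y_zero]
        have h : ∑ s ∈ Finset.range M,
            Real.cos ((n+1 : ℕ) * (2 * π * (s + 1) / M)) / Real.sqrt π * (1 / Real.sqrt (2*π))
            = (∑ s ∈ Finset.range M, Real.cos (((n+1:ℕ):ℝ) * (2 * π * (s + 1) / M)))
              * (1 / Real.sqrt π * (1 / Real.sqrt (2*π))) := by
          rw [Finset.sum_mul]
          exact Finset.sum_congr rfl fun s _ => by ring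
        rw [h, sum_cos_zero M (n+1) (by omega) hnM]
        ring
      · simp only [Y_succ_two, Y_zero]
        have h : ∑ s ∈ Finset.range M,
            Real.sin ((n+1 : ℕ) * (2 * π * (s + 1) / M)) / Real.sqrt π * (1 / Real.sqrt (2*π))
            = (∑ s ∈ Finset.range M, Real.sin (((n+1:ℕ):ℝ) * (2 * π * (s + 1) / M)))
              * (1 / Real.sqrt π * (1 / Real.sqrt (2*π))) := by
          rw [Finset.sum_mul]
          exact Finset.sum_congr rfl fun s _ => by ring
        rw [h, sum_sin_zero M (n+1) hnM]
        ring
  · -- k = m+1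
    have hmM : m + 1 < M := by omega
    have hl : ℓ = 1 ∨ ℓ = 2 := by simp [aa] at hl2; omega
    rcases k₁ with _ | n
    · -- k₁ = 0
      have hl' : ℓ₁ = 1 := by simp [aa] at hl2'; omega
      subst hl'
      rw [if_neg (by simp)]
      rcases hl with rfl | rfl
      · simp only [Y_succ_one, Y_zero]
        have h : ∑ s ∈ Finset.range M,
            (1 / Real.sqrt (2*π)) * (Real.cos ((m+1 : ℕ) * (2 * π * (s + 1) / M)) / Real.sqrt π)
            = (∑ s ∈ Finset.range M, Real.cos (((m+1:ℕ):ℝ) * (2 * π * (s + 1) / M)))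
              * (1 / Real.sqrt π * (1 / Real.sqrt (2*π))) := by
          rw [Finset.sum_mul]
          exact Finset.sum_congr rfl fun s _ => by ring
        rw [h, sum_cos_zero M (m+1) (by omega) hmM]
        ring
      · simp only [Y_succ_two, Y_zero]
        have h : ∑ s ∈ Finset.range M,
            (1 / Real.sqrt (2*π)) * (Real.sin ((m+1 : ℕ) * (2 * π * (s + 1) / M)) / Real.sqrt π)
            = (∑ s ∈ Finset.range M, Real.sin (((m+1:ℕ):ℝ) * (2 * π * (s + 1) / M)))
              * (1 / Real.sqrt π * (1 / Real.sqrt (2*π))) := by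
          rw [Finset.sum_mul]
          exact Finset.sum_congr rfl fun s _ => by ring
        rw [h, sum_sin_zero M (m+1) hmM]
        ring
    · -- k = m+1, k₁ = n+1
      have hab : (n+1) + (m+1) < M := by omega
      have hl' : ℓ₁ = 1 ∨ ℓ₁ = 2 := by simp [aa] at hl2'; omega
      rcases hl with rfl | rfl <;> rcases hl' with rfl | rfl
      · -- ℓ = 1, ℓ₁ = 1 : cos * cos
        simp only [Y_succ_one]
        have h : ∑ s ∈ Finset.range M,
            Real.cos ((n+1 : ℕ) * (2 * π * (s + 1) / M)) / Real.sqrt π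
              * (Real.cos ((m+1 : ℕ) * (2 * π * (s + 1) / M)) / Real.sqrt π)
            = (∑ s ∈ Finset.range M, Real.cos (((n+1:ℕ):ℝ) * (2 * π * (s + 1) / M))
                * Real.cos (((m+1:ℕ):ℝ) * (2 * π * (s + 1) / M))) / π := by
          rw [Finset.sum_div]
          refine Finset.sum_congr rfl fun s _ => ?_
          rw [div_mul_div_comm, hsqπ]
        rw [h, Scc M (n+1) (m+1) (by omega) (by omega) hab]
        by_cases hmn : m = n
        · subst hmn
          rw [if_pos rfl, if_pos (⟨rfl, trivial⟩ : m+1 = m+1 ∧ True)]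
          field_simp
        · rw [if_neg (by omega), if_neg (by omega)]
          simp
      · -- ℓ = 1, ℓ₁ = 2 : sin * cos
        simp only [Y_succ_one, Y_succ_two]
        have h : ∑ s ∈ Finset.range M,
            Real.sin ((n+1 : ℕ) * (2 * π * (s + 1) / M)) / Real.sqrt π
              * (Real.cos ((m+1 : ℕ) * (2 * π * (s + 1) / M)) / Real.sqrt π)
            = (∑ s ∈ Finset.range M, Real.sin (((n+1:ℕ):ℝ) * (2 * π * (s + 1) / M))
                * Real.cos (((m+1:ℕ):ℝ) * (2 * π * (s + 1) / M))) / π := by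
          rw [Finset.sum_div]
          refine Finset.sum_congr rfl fun s _ => ?_
          rw [div_mul_div_comm, hsqπ]
        rw [h, Ssc M (n+1) (m+1) hab, if_neg (by simp)]
        simp
      · -- ℓ = 2, ℓ₁ = 1 : cos * sin
        simp only [Y_succ_one, Y_succ_two]
        have h : ∑ s ∈ Finset.range M,
            Real.cos ((n+1 : ℕ) * (2 * π * (s + 1) / M)) / Real.sqrt π
              * (Real.sin ((m+1 : ℕ) * (2 * π * (s + 1) / M)) / Real.sqrt π)
            = (∑ s ∈ Finset.range M, Real.sin (((m+1:ℕ):ℝ) * (2 * π * (s + 1) / M))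
                * Real.cos (((n+1:ℕ):ℝ) * (2 * π * (s + 1) / M))) / π := by
          rw [Finset.sum_div]
          refine Finset.sum_congr rfl fun s _ => ?_
          rw [div_mul_div_comm, hsqπ, mul_comm]
        rw [h, Ssc M (m+1) (n+1) (by omega), if_neg (by simp)]
        simp
      · -- ℓ = 2, ℓ₁ = 2 : sin * sin
        simp only [Y_succ_two]
        have h : ∑ s ∈ Finset.range M,
            Real.sin ((n+1 : ℕ) * (2 * π * (s + 1) / M)) / Real.sqrt π
              * (Real.sin ((m+1 : ℕ) * (2 * π * (s + 1) / M)) / Real.sqrt π)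
            = (∑ s ∈ Finset.range M, Real.sin (((n+1:ℕ):ℝ) * (2 * π * (s + 1) / M))
                * Real.sin (((m+1:ℕ):ℝ) * (2 * π * (s + 1) / M))) / π := by
          rw [Finset.sum_div]
          refine Finset.sum_congr rfl fun s _ => ?_
          rw [div_mul_div_comm, hsqπ]
        rw [h, Sss M (n+1) (m+1) (by omega) (by omega) hab]
        by_cases hmn : m = n
        · subst hmn
          rw [if_pos rfl, if_pos (⟨rfl, trivial⟩ : m+1 = m+1 ∧ True)]
          field_simp
        · rw [if_neg (by omega), if_neg (by omega)]
          simp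
end

section
/- Fix an integer k ≥ 0 and let μ be a finite positive measure on [0, R²] with density ρ^{k/2} v(√ρ) dρ/2 where v : (0,R) → [0,∞) is continuous with ∫_0^R v(r) r dr < ∞, and assume μ has infinite support. Let t_j, λ_j (j = 1,…,N) be the nodes and positive weights of the N-point Gaussian quadrature for μ. Then Σ_{j=1}^{N} λ_j · t_j^{−k/2} ≤ ∫_0^R v(r) r dr. -/
open Real MeasureTheory

section GaussAuxLemmas
open Polynomial Finset Set

lemma contDiff_polyEval (p : Polynomial ℝ) : ContDiff ℝ (⊤ : ℕ∞) fun x : ℝ => p.eval x := by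
  induction p using Polynomial.induction_on' with
  | add p q hp hq => simpa [Polynomial.eval_add] using hp.add hq
  | monomial n a =>
      simpa [Polynomial.eval_monomial] using contDiff_const.mul (contDiff_id.pow n)

lemma genRolle : ∀ (n : ℕ) (f : ℝ → ℝ), ContDiffOn ℝ (⊤ : ℕ∞) f (Set.Ioi 0) →
    ∀ z : Fin (n+1) → ℝ, StrictMono z → (∀ i, 0 < z i) → (∀ i, f (z i) = 0) →
    ∃ c, 0 < c ∧ iteratedDeriv n f c = 0 := by
  intro n
  induction n with
  | zero => intro f hf z hz hzpos hzero; exact ⟨z 0, hzpos 0, by simpa using hzero 0⟩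
  | succ n ih =>
    intro f hf z hz hzpos hzero
    have key : ∀ i : Fin (n+1), ∃ sp, sp ∈ Set.Ioo (z i.castSucc) (z i.succ) ∧ deriv f sp = 0 := by
      intro i
      have hlt : z i.castSucc < z i.succ := hz (Fin.castSucc_lt_succ : i.castSucc < i.succ)
      have hsub : Set.Icc (z i.castSucc) (z i.succ) ⊆ Set.Ioi 0 := fun y hy =>
        lt_of_lt_of_le (hzpos i.castSucc) hy.1
      obtain ⟨c, hc, hc0⟩ := exists_deriv_eq_zero hlt ((hf.continuousOn).mono hsub)
        (by rw [hzero, hzero])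
      exact ⟨c, hc, hc0⟩
    choose s hs hs0 using key
    have hsmono : StrictMono s := by
      intro i j hij
      have h1 : s i < z i.succ := (hs i).2
      have h2 : z j.castSucc < s j := (hs j).1
      have h3 : z i.succ ≤ z j.castSucc := hz.monotone (by
        rw [Fin.le_def]
        simp only [Fin.val_succ, Fin.coe_castSucc]
        have := Fin.lt_def.mp hij
        omega)
      linarith
    have hspos : ∀ i, 0 < s i := fun i => lt_trans (hzpos _) (hs i).1
    obtain ⟨c, hc, h0⟩ := ih (deriv f) (hf.deriv_of_isOpen isOpen_Ioi (by simp)) s hsmono hspos hs0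
    exact ⟨c, hc, by rw [iteratedDeriv_succ']; exact h0⟩

lemma iterDeriv_formula (e : ℝ) (Q : Polynomial ℝ) :
    ∀ (n : ℕ) (x : ℝ), 0 < x →
      iteratedDeriv n (fun ρ => ρ ^ e - Q.eval ρ) x
        = (∏ i ∈ Finset.range n, (e - i)) * x ^ (e - n) -
          (Polynomial.derivative^[n] Q).eval x := by
  intro n
  induction n with
  | zero => intro x hx; simp
  | succ n ih =>
    intro x hx
    rw [iteratedDeriv_succ]
    have hev : (iteratedDeriv n fun ρ => ρ ^ e - Q.eval ρ) =ᶠ[nhds x]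
        (fun y => (∏ i ∈ Finset.range n, (e - i)) * y ^ (e - n) -
          (Polynomial.derivative^[n] Q).eval y) := by
      filter_upwards [IsOpen.mem_nhds isOpen_Ioi hx] with y hy
      exact ih y hy
    rw [hev.deriv_eq]
    have h1 : HasDerivAt (fun y : ℝ => (∏ i ∈ Finset.range n, (e - i)) * y ^ (e - n))
        ((∏ i ∈ Finset.range n, (e - i)) * ((e - n) * x ^ (e - n - 1))) x :=
      (Real.hasDerivAt_rpow_const (Or.inl hx.ne')).const_mul _
    have h2 := Polynomial.hasDerivAt (Polynomial.derivative^[n] Q) x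
    have h3 : HasDerivAt (fun y => (∏ i ∈ Finset.range n, (e - i)) * y ^ (e - n) -
        (Polynomial.derivative^[n] Q).eval y) _ x := h1.sub h2
    rw [h3.deriv]
    have hexp : e - ((n : ℝ) + 1) = e - n - 1 := by ring
    rw [Finset.prod_range_succ, Function.iterate_succ_apply']
    push_cast
    rw [hexp]
    ring

lemma iterate_derivative_eq_C : ∀ (n : ℕ) (p : Polynomial ℝ), p.natDegree ≤ n →
    Polynomial.derivative^[n] p = Polynomial.C ((Nat.factorial n : ℝ) * p.coeff n) := by
  intro n
  induction n with
  | zero =>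
    intro p hp
    have := Polynomial.eq_C_of_natDegree_le_zero hp
    simpa using this
  | succ n ih =>
    intro p hp
    rw [Function.iterate_succ_apply, ih (Polynomial.derivative p)
      (by have := p.natDegree_derivative_le; omega)]
    rw [Polynomial.coeff_derivative]
    congr 1
    rw [Nat.factorial_succ]
    push_cast
    ring

lemma hermite_exists (M : ℕ) (t : Fin M → ℝ) (htinj : Function.Injective t)
    (fv fd : Fin M → ℝ) :
    ∃ H : Polynomial ℝ, H.degree < (2 * M : ℕ) ∧ (∀ j, H.eval (t j) = fv j) ∧
      (∀ j, (Polynomial.derivative H).eval (t j) = fd j) := by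
  classical
  set c : Fin (2 * M) → (Polynomial.degreeLT ℝ (2 * M) →ₗ[ℝ] ℝ) := fun j =>
    if h : (j : ℕ) < M then
      (Polynomial.leval (t ⟨j, h⟩)).comp (Polynomial.degreeLT ℝ (2 * M)).subtype
    else
      (Polynomial.leval (t ⟨(j : ℕ) - M, by omega⟩)).comp
        ((Polynomial.derivative (R := ℝ)).comp (Polynomial.degreeLT ℝ (2 * M)).subtype)
    with hc
  set T : Polynomial.degreeLT ℝ (2 * M) →ₗ[ℝ] (Fin (2 * M) → ℝ) := LinearMap.pi c with hT
  have hTapp_lo : ∀ (p : Polynomial.degreeLT ℝ (2 * M)) (j : Fin M),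
      T p ⟨(j : ℕ), by omega⟩ = Polynomial.eval (t j) (p : Polynomial ℝ) := by
    intro p j
    have hj : ((⟨(j : ℕ), by omega⟩ : Fin (2 * M)) : ℕ) < M := j.2
    simp only [hT, LinearMap.pi_apply, hc, dif_pos hj]
    simp [Polynomial.leval]
  have hTapp_hi : ∀ (p : Polynomial.degreeLT ℝ (2 * M)) (j : Fin M),
      T p ⟨M + (j : ℕ), by omega⟩
        = Polynomial.eval (t j) (Polynomial.derivative (p : Polynomial ℝ)) := by
    intro p j
    have hj : ¬ ((⟨M + (j : ℕ), by omega⟩ : Fin (2 * M)) : ℕ) < M := by simp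
    simp only [hT, LinearMap.pi_apply, hc, dif_neg hj]
    have : (⟨M + (j : ℕ), by omega⟩ : Fin (2 * M)).val - M = (j : ℕ) := by simp
    simp only [this]
    simp [Polynomial.leval]
  have hTinj : Function.Injective T := by
    rw [← LinearMap.ker_eq_bot, LinearMap.ker_eq_bot']
    intro p hp
    have hev : ∀ j : Fin M, Polynomial.eval (t j) (p : Polynomial ℝ) = 0 := by
      intro j
      rw [← hTapp_lo p j, hp]; rfl
    have hder : ∀ j : Fin M, Polynomial.eval (t j) (Polynomial.derivative (p : Polynomial ℝ)) = 0 := by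
      intro j
      rw [← hTapp_hi p j, hp]; rfl
    have hdvd : ∀ j : Fin M, (Polynomial.X - Polynomial.C (t j))^2 ∣ (p : Polynomial ℝ) := by
      intro j
      obtain ⟨q, hq⟩ := (Polynomial.dvd_iff_isRoot).mpr (hev j)
      have hd := hder j
      rw [hq, Polynomial.derivative_mul] at hd
      simp only [Polynomial.eval_add, Polynomial.eval_mul, Polynomial.eval_sub,
        Polynomial.eval_X, Polynomial.eval_C, sub_self, zero_mul, mul_zero, zero_add,
        Polynomial.derivative_sub, Polynomial.derivative_X, Polynomial.derivative_C,
        sub_zero, Polynomial.eval_one, one_mul] at hd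
      rw [add_zero] at hd
      obtain ⟨r, hr⟩ := (Polynomial.dvd_iff_isRoot).mpr hd
      exact ⟨r, by rw [hq, hr]; ring⟩
    have hprod : (∏ j : Fin M, (Polynomial.X - Polynomial.C (t j))^2) ∣ (p : Polynomial ℝ) :=
      Finset.prod_dvd_of_coprime
        (fun a _ b _ hab => ((Polynomial.pairwise_coprime_X_sub_C htinj) hab).pow)
        (fun j _ => hdvd j)
    have hqdeg : (∏ j : Fin M, (Polynomial.X - Polynomial.C (t j))^2).natDegree = 2 * M := by
      rw [Finset.prod_pow, Polynomial.natDegree_pow, Polynomial.natDegree_prod_of_monic _ _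
        (fun j _ => Polynomial.monic_X_sub_C _)]
      simp [Polynomial.natDegree_X_sub_C, Finset.card_univ]
    have hqmonic : (∏ j : Fin M, (Polynomial.X - Polynomial.C (t j))^2).Monic :=
      Polynomial.monic_prod_of_monic _ _ (fun j _ => (Polynomial.monic_X_sub_C _).pow _)
    have hpz : (p : Polynomial ℝ) = 0 := by
      apply Polynomial.eq_zero_of_dvd_of_degree_lt hprod
      rw [Polynomial.degree_eq_natDegree hqmonic.ne_zero, hqdeg]
      exact_mod_cast Polynomial.mem_degreeLT.mp p.2
    exact Subtype.ext hpz
  set e1 := Polynomial.degreeLTEquiv ℝ (2 * M) with he1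
  have hsurj : Function.Surjective T := by
    have hinj2 : Function.Injective (T ∘ₗ (e1.symm : (Fin (2*M) → ℝ) →ₗ[ℝ] Polynomial.degreeLT ℝ (2 * M))) :=
      hTinj.comp e1.symm.injective
    have hs := (LinearMap.injective_iff_surjective).mp hinj2
    intro v
    obtain ⟨w, hw⟩ := hs v
    exact ⟨e1.symm w, hw⟩
  obtain ⟨p, hp⟩ := hsurj (fun j => if h : (j : ℕ) < M then fv ⟨j, h⟩
    else fd ⟨(j : ℕ) - M, by omega⟩)
  refine ⟨(p : Polynomial ℝ), Polynomial.mem_degreeLT.mp p.2, ?_, ?_⟩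
  · intro j
    have h1 := congrFun hp ⟨(j : ℕ), by omega⟩
    rw [hTapp_lo p j] at h1
    rw [h1]
    have hj : ((⟨(j : ℕ), by omega⟩ : Fin (2 * M)) : ℕ) < M := j.2
    simp [dif_pos hj]
  · intro j
    have h1 := congrFun hp ⟨M + (j : ℕ), by omega⟩
    rw [hTapp_hi p j] at h1
    rw [h1]
    have hj : ¬ ((⟨M + (j : ℕ), by omega⟩ : Fin (2 * M)) : ℕ) < M := by simp
    rw [dif_neg hj]
    congr 1
    apply Fin.ext
    simp
lemma key_bound (N k : ℕ) (hN : 1 ≤ N) (t : Fin N → ℝ) (ht : StrictMono t)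
    (htpos : ∀ j, 0 < t j) :
    ∃ H : Polynomial ℝ, H.degree < (2 * N : ℕ) ∧
      (∀ j, H.eval (t j) = (t j) ^ (-(k : ℝ) / 2)) ∧
      ∀ x, 0 < x → H.eval x ≤ x ^ (-(k : ℝ) / 2) := by
  classical
  set e : ℝ := -(k : ℝ) / 2 with he
  obtain ⟨H, hdeg, hev, hder⟩ := hermite_exists N t ht.injective
      (fun j => (t j) ^ e) (fun j => e * (t j) ^ (e - 1))
  refine ⟨H, hdeg, hev, ?_⟩
  by_contra hcon
  push_neg at hcon
  obtain ⟨x, hx, hlt⟩ := hcon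
  have hxt : ∀ j, x ≠ t j := by
    intro j hxj; rw [hxj, hev j] at hlt; exact lt_irrefl _ hlt
  set q : Polynomial ℝ := ∏ j : Fin N, (Polynomial.X - Polynomial.C (t j)) with hq
  set ω : Polynomial ℝ := q ^ 2 with hω
  have hqx : q.eval x ≠ 0 := by
    rw [hq, Polynomial.eval_prod]
    exact Finset.prod_ne_zero_iff.mpr (fun j _ => by
      simp only [Polynomial.eval_sub, Polynomial.eval_X, Polynomial.eval_C]
      exact sub_ne_zero.mpr (hxt j))
  have hωx : 0 < ω.eval x := by
    rw [hω, Polynomial.eval_pow]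
    positivity
  set Cx : ℝ := (x ^ e - H.eval x) / ω.eval x with hCx
  have hCxneg : Cx < 0 := div_neg_of_neg_of_pos (by linarith) hωx
  set P : Polynomial ℝ := H + Polynomial.C Cx * ω with hP
  set φ : ℝ → ℝ := fun ρ => ρ ^ e - P.eval ρ with hφ
  have hφsm : ContDiffOn ℝ (⊤ : ℕ∞) φ (Set.Ioi 0) := by
    apply ContDiffOn.sub
    · intro y hy
      exact (Real.contDiffAt_rpow_const_of_ne (ne_of_gt hy)).contDiffWithinAt
    · exact (contDiff_polyEval P).contDiffOn
  have hqt : ∀ j, q.eval (t j) = 0 := fun j => by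
    rw [hq, Polynomial.eval_prod]
    exact Finset.prod_eq_zero (Finset.mem_univ j) (by simp)
  have hωt : ∀ j, ω.eval (t j) = 0 := fun j => by
    rw [hω, Polynomial.eval_pow, hqt j]; ring
  have hω't : ∀ j, (Polynomial.derivative ω).eval (t j) = 0 := by
    intro j
    rw [hω, Polynomial.derivative_pow]
    simp [hqt j]
  have hφt : ∀ j, φ (t j) = 0 := by
    intro j
    simp only [hφ, hP, Polynomial.eval_add, Polynomial.eval_mul, Polynomial.eval_C, hωt j,
      mul_zero, add_zero, hev j]
    ring
  have hφx : φ x = 0 := by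
    simp only [hφ, hP, Polynomial.eval_add, Polynomial.eval_mul, Polynomial.eval_C, hCx]
    field_simp
    ring
  have hφderiv : ∀ y, 0 < y → deriv φ y = e * y ^ (e - 1) - (Polynomial.derivative P).eval y := by
    intro y hy
    have h1 : HasDerivAt (fun ρ : ℝ => ρ ^ e) (e * y ^ (e-1)) y :=
      Real.hasDerivAt_rpow_const (Or.inl (ne_of_gt hy))
    exact ((h1.sub (Polynomial.hasDerivAt P y))).deriv
  have hφ't : ∀ j, deriv φ (t j) = 0 := by
    intro j
    rw [hφderiv _ (htpos j), hP]
    simp only [Polynomial.derivative_add, Polynomial.derivative_C_mul, Polynomial.eval_add,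
      Polynomial.eval_mul, Polynomial.eval_C, hω't j, mul_zero, add_zero, hder j]
    ring
  -- zero set of φ
  set Z : Finset ℝ := insert x (Finset.image t Finset.univ) with hZ
  have hxnot : x ∉ Finset.image t Finset.univ := by
    simp only [Finset.mem_image, Finset.mem_univ, true_and, not_exists]
    intro j hj; exact hxt j hj.symm
  have hZcard : Z.card = N + 1 := by
    rw [hZ, Finset.card_insert_of_notMem hxnot,
      Finset.card_image_of_injective _ ht.injective, Finset.card_univ, Fintype.card_fin]
  set z : Fin (N + 1) → ℝ := fun i => ((Z.orderIsoOfFin hZcard) i : ℝ) with hz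
  have hzmono : StrictMono z := fun i j hij => by
    exact_mod_cast (Z.orderIsoOfFin hZcard).strictMono hij
  have hzmem : ∀ i, z i ∈ Z := fun i => ((Z.orderIsoOfFin hZcard) i).2
  have hZpos : ∀ y ∈ Z, (0:ℝ) < y := by
    intro y hy
    rcases Finset.mem_insert.mp hy with h | h
    · rw [h]; exact hx
    · obtain ⟨j, _, hj⟩ := Finset.mem_image.mp h
      rw [← hj]; exact htpos j
  have hZzero : ∀ y ∈ Z, φ y = 0 := by
    intro y hy
    rcases Finset.mem_insert.mp hy with h | h
    · rw [h]; exact hφx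
    · obtain ⟨j, _, hj⟩ := Finset.mem_image.mp h
      rw [← hj]; exact hφt j
  have hzpos : ∀ i, 0 < z i := fun i => hZpos _ (hzmem i)
  have hzzero : ∀ i, φ (z i) = 0 := fun i => hZzero _ (hzmem i)
  -- Rolle points
  have key : ∀ i : Fin N, ∃ sp, sp ∈ Set.Ioo (z i.castSucc) (z i.succ) ∧ deriv φ sp = 0 := by
    intro i
    have hlt' : z i.castSucc < z i.succ := hzmono (Fin.castSucc_lt_succ : i.castSucc < i.succ)
    have hsub : Set.Icc (z i.castSucc) (z i.succ) ⊆ Set.Ioi 0 := fun y hy =>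
      lt_of_lt_of_le (hzpos i.castSucc) hy.1
    obtain ⟨c, hc, hc0⟩ := exists_deriv_eq_zero hlt' ((hφsm.continuousOn).mono hsub)
      (by rw [hzzero, hzzero])
    exact ⟨c, hc, hc0⟩
  choose s hsmem hs0 using key
  have hsmono : StrictMono s := by
    intro i j hij
    have h1 : s i < z i.succ := (hsmem i).2
    have h2 : z j.castSucc < s j := (hsmem j).1
    have h3 : z i.succ ≤ z j.castSucc := hzmono.monotone (by
      rw [Fin.le_def]
      simp only [Fin.val_succ, Fin.coe_castSucc]
      have := Fin.lt_def.mp hij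
      omega)
    linarith
  have hspos : ∀ i, 0 < s i := fun i => lt_trans (hzpos _) (hsmem i).1
  have ht_in_z : ∀ j : Fin N, ∃ i0, z i0 = t j := by
    intro j
    have hmem : t j ∈ Z := by
      rw [hZ]
      exact Finset.mem_insert_of_mem (Finset.mem_image_of_mem _ (Finset.mem_univ j))
    obtain ⟨i0, hi0⟩ := (Z.orderIsoOfFin hZcard).surjective ⟨t j, hmem⟩
    exact ⟨i0, by rw [hz]; exact congrArg Subtype.val hi0⟩
  have hst : ∀ i j, s i ≠ t j := by
    intro i j hcon
    obtain ⟨i0, hi0⟩ := ht_in_z j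
    have h1 := (hsmem i).1
    have h2 := (hsmem i).2
    rcases le_or_gt i0 i.castSucc with h | h
    · have : z i0 ≤ z i.castSucc := hzmono.monotone h
      rw [hi0, ← hcon] at this
      linarith
    · have hle : i.succ ≤ i0 := by
        rw [Fin.le_def]
        simp only [Fin.val_succ]
        have := Fin.lt_def.mp h
        simp only [Fin.coe_castSucc] at this
        omega
      have : z i.succ ≤ z i0 := hzmono.monotone hle
      rw [hi0, ← hcon] at this
      linarith
  -- merged zeros of deriv φ
  set W : Finset ℝ := Finset.image s Finset.univ ∪ Finset.image t Finset.univ with hW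
  have hdisj : Disjoint (Finset.image s Finset.univ) (Finset.image t Finset.univ) := by
    rw [Finset.disjoint_left]
    intro a ha hb
    obtain ⟨i, _, hi⟩ := Finset.mem_image.mp ha
    obtain ⟨j, _, hj⟩ := Finset.mem_image.mp hb
    exact hst i j (by rw [hi, hj])
  have hWcard : W.card = 2 * N := by
    rw [hW, Finset.card_union_of_disjoint hdisj,
      Finset.card_image_of_injective _ hsmono.injective,
      Finset.card_image_of_injective _ ht.injective]
    simp only [Finset.card_univ, Fintype.card_fin]
    omega
  set w : Fin (2 * N) → ℝ := fun i => ((W.orderIsoOfFin hWcard) i : ℝ) with hwdef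
  have hwmono : StrictMono w := fun i j hij => by
    exact_mod_cast (W.orderIsoOfFin hWcard).strictMono hij
  have hwmem : ∀ i, w i ∈ W := fun i => ((W.orderIsoOfFin hWcard) i).2
  have hwpos : ∀ i, 0 < w i := by
    intro i
    rcases Finset.mem_union.mp (hwmem i) with h | h
    · obtain ⟨i', _, hi'⟩ := Finset.mem_image.mp h
      rw [← hi']; exact hspos i'
    · obtain ⟨j, _, hj⟩ := Finset.mem_image.mp h
      rw [← hj]; exact htpos j
  have hwzero : ∀ i, deriv φ (w i) = 0 := by
    intro i
    rcases Finset.mem_union.mp (hwmem i) with h | h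
    · obtain ⟨i', _, hi'⟩ := Finset.mem_image.mp h
      rw [← hi']; exact hs0 i'
    · obtain ⟨j, _, hj⟩ := Finset.mem_image.mp h
      rw [← hj]; exact hφ't j
  have h2N : 2 * N - 1 + 1 = 2 * N := by omega
  obtain ⟨c, hcpos, hc0⟩ := genRolle (2 * N - 1) (deriv φ)
    (hφsm.deriv_of_isOpen isOpen_Ioi (by simp)) (fun i => w (Fin.cast h2N i))
    (fun i j hij => hwmono (by rw [Fin.lt_def]; exact Fin.lt_def.mp hij))
    (fun i => hwpos _) (fun i => hwzero _)
  have hc2 : iteratedDeriv (2 * N) φ c = 0 := by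
    have h' : (2 * N : ℕ) = (2 * N - 1) + 1 := by omega
    rw [h', iteratedDeriv_succ']
    exact hc0
  -- compute the iterated derivative
  have hform := iterDeriv_formula e P (2 * N) c hcpos
  have hHnat : H.natDegree < 2 * N := by
    rcases eq_or_ne H 0 with h0 | h0
    · rw [h0]; simp only [Polynomial.natDegree_zero]; omega
    · exact (Polynomial.natDegree_lt_iff_degree_lt h0).mpr hdeg
  have hHzero : Polynomial.derivative^[2 * N] H = 0 :=
    Polynomial.iterate_derivative_eq_zero hHnat
  have hqmonic : q.Monic := Polynomial.monic_prod_of_monic _ _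
    (fun j _ => Polynomial.monic_X_sub_C _)
  have hωmonic : ω.Monic := hqmonic.pow _
  have hωdeg : ω.natDegree = 2 * N := by
    rw [hω, Polynomial.natDegree_pow, hq, Polynomial.natDegree_prod_of_monic _ _
      (fun j _ => Polynomial.monic_X_sub_C _)]
    simp [Polynomial.natDegree_X_sub_C, Finset.card_univ]
  have hωiter : Polynomial.derivative^[2 * N] ω
      = Polynomial.C ((Nat.factorial (2 * N) : ℝ)) := by
    rw [iterate_derivative_eq_C _ ω (le_of_eq hωdeg)]
    congr 1
    have : ω.coeff (2 * N) = 1 := by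
      rw [← hωdeg]; exact hωmonic.coeff_natDegree
    rw [this, mul_one]
  have hPdeg : P.natDegree ≤ 2 * N := by
    refine le_trans (Polynomial.natDegree_add_le _ _) (max_le hHnat.le ?_)
    exact le_trans (Polynomial.natDegree_C_mul_le _ _) (le_of_eq hωdeg)
  have hPcoeff : P.coeff (2 * N) = Cx := by
    rw [hP, Polynomial.coeff_add, Polynomial.coeff_C_mul,
      Polynomial.coeff_eq_zero_of_natDegree_lt hHnat, zero_add]
    have : ω.coeff (2 * N) = 1 := by
      rw [← hωdeg]; exact hωmonic.coeff_natDegree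
    rw [this, mul_one]
  have hPiter : (Polynomial.derivative^[2 * N] P)
      = Polynomial.C (Cx * (Nat.factorial (2 * N) : ℝ)) := by
    rw [iterate_derivative_eq_C _ P hPdeg, hPcoeff]
    ring_nf
  rw [hc2, hPiter] at hform
  have hA : 0 ≤ ∏ i ∈ Finset.range (2 * N), (e - i) := by
    have heq : ∏ i ∈ Finset.range (2 * N), (e - i)
        = ∏ i ∈ Finset.range (2 * N), ((-1) * ((k : ℝ)/2 + i)) := by
      apply Finset.prod_congr rfl
      intro i _
      rw [he]; ring
    rw [heq, Finset.prod_mul_distrib, Finset.prod_const, Finset.card_range]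
    have h1 : ((-1 : ℝ)) ^ (2 * N) = 1 := Even.neg_one_pow ⟨N, by ring⟩
    rw [h1, one_mul]
    apply Finset.prod_nonneg
    intro i _
    positivity
  have hcpow : (0:ℝ) < c ^ (e - (2 * N : ℕ)) := Real.rpow_pos_of_pos hcpos _
  have hfact : (0:ℝ) < (Nat.factorial (2 * N) : ℝ) := by positivity
  have hbad : Cx * (Nat.factorial (2 * N) : ℝ) < 0 := mul_neg_of_neg_of_pos hCxneg hfact
  have hgood : (0:ℝ) ≤ (∏ i ∈ Finset.range (2 * N), (e - i)) * c ^ (e - (2 * N : ℕ)) :=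
    mul_nonneg hA hcpow.le
  rw [Polynomial.eval_C] at hform
  linarith

end GaussAuxLemmas

section Main
open Polynomial Finset Set

/-- For the measure with density `ρ^{k/2} v(√ρ)/2` on `[0, R²]`, the `N`-point
Gaussian quadrature nodes `t_j` and positive weights `λ_j` satisfy
`∑_j λ_j t_j^{−k/2} ≤ ∫_0^R v(r) r dr`. -/
theorem gauss_jacobi_weight_bound (R : ℝ) (hR : 0 < R) (k N : ℕ) (hN : 1 ≤ N)
    (v : ℝ → ℝ) (hvcont : ContinuousOn v (Set.Ioo 0 R))
    (hvpos : ∀ r ∈ Set.Ioo (0:ℝ) R, 0 ≤ v r)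
    (hvint : IntervalIntegrable (fun r => v r * r) volume 0 R)
    (t lam : Fin N → ℝ)
    (ht : StrictMono t) (htmem : ∀ j, t j ∈ Set.Ioc 0 (R ^ 2))
    (hlam : ∀ j, 0 < lam j)
    -- exactness of the Gaussian quadrature on polynomials of degree ≤ 2N−1:
    (hexact : ∀ p : Polynomial ℝ, p.natDegree ≤ 2 * N - 1 →
      ∑ j, lam j * p.eval (t j)
        = (1 / 2) * ∫ ρ in (0:ℝ)..(R ^ 2),
            p.eval ρ * ρ ^ ((k : ℝ) / 2) * v (Real.sqrt ρ))
    -- infinite support of the measure (positive definiteness):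
    (hinf : ∀ p : Polynomial ℝ, p ≠ 0 →
      0 < (1 / 2) * ∫ ρ in (0:ℝ)..(R ^ 2),
            (p.eval ρ) ^ 2 * ρ ^ ((k : ℝ) / 2) * v (Real.sqrt ρ)) :
    ∑ j, lam j * (t j) ^ (-(k : ℝ) / 2) ≤ ∫ r in (0:ℝ)..R, v r * r := by
  classical
  have htpos : ∀ j, 0 < t j := fun j => (htmem j).1
  obtain ⟨H, hdeg, hev, hbound⟩ := key_bound N k hN t ht htpos
  have hHnat : H.natDegree ≤ 2 * N - 1 := by
    rcases eq_or_ne H 0 with h0 | h0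
    · rw [h0]; simp only [Polynomial.natDegree_zero]; omega
    · have := (Polynomial.natDegree_lt_iff_degree_lt h0).mpr hdeg
      omega
  have hR2 : (0:ℝ) < R ^ 2 := by positivity
  -- substitution setup : g r = r^2 on Ioo 0 R
  set g : ℝ → ℝ := fun r => r ^ 2 with hg
  have himg : g '' (Set.Ioo 0 R) = Set.Ioo 0 (R ^ 2) := by
    ext y
    constructor
    · rintro ⟨r, hr, rfl⟩
      exact ⟨pow_pos hr.1 2, by exact pow_lt_pow_left₀ hr.2 hr.1.le two_ne_zero⟩
    · intro hy
      refine ⟨Real.sqrt y, ⟨Real.sqrt_pos.mpr hy.1, ?_⟩, Real.sq_sqrt hy.1.le⟩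
      rw [show R = Real.sqrt (R ^ 2) from (Real.sqrt_sq hR.le).symm]
      exact Real.sqrt_lt_sqrt hy.1.le hy.2
  have hgderiv : ∀ r ∈ Set.Ioo (0:ℝ) R, HasDerivWithinAt g (2 * r) (Set.Ioo 0 R) r := by
    intro r _
    have := (hasDerivAt_pow 2 r).hasDerivWithinAt (s := Set.Ioo (0:ℝ) R)
    simpa using this
  have hginj : Set.InjOn g (Set.Ioo 0 R) := by
    intro a ha b hb hab
    simp only [hg] at hab
    nlinarith [ha.1, hb.1]
  -- base integrability
  have hbase : IntegrableOn (fun r => v r * r) (Set.Ioo 0 R) volume := by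
    exact hvint.1.mono_set Set.Ioo_subset_Ioc_self
  have habs_eq : Set.EqOn (fun r => |2 * r| • v (Real.sqrt (g r)))
      (fun r => 2 * (v r * r)) (Set.Ioo 0 R) := by
    intro r hr
    simp only [hg, smul_eq_mul]
    rw [Real.sqrt_sq hr.1.le, abs_of_pos (by linarith [hr.1])]
    ring
  have hInt1 : IntegrableOn (fun ρ => v (Real.sqrt ρ)) (Set.Ioo 0 (R ^ 2)) volume := by
    rw [← himg]
    rw [MeasureTheory.integrableOn_image_iff_integrableOn_abs_deriv_smul
      measurableSet_Ioo hgderiv hginj]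
    exact (IntegrableOn.congr_fun (hbase.const_mul 2) habs_eq.symm measurableSet_Ioo)
  have hIntEq : ∫ ρ in Set.Ioo 0 (R ^ 2), v (Real.sqrt ρ)
      = 2 * ∫ r in (0:ℝ)..R, v r * r := by
    rw [← himg, MeasureTheory.integral_image_eq_integral_abs_deriv_smul
      measurableSet_Ioo hgderiv hginj]
    rw [MeasureTheory.setIntegral_congr_fun measurableSet_Ioo habs_eq]
    rw [MeasureTheory.integral_const_mul]
    congr 1
    rw [intervalIntegral.integral_of_le hR.le, MeasureTheory.integral_Ioc_eq_integral_Ioo]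
  -- integrand a
  set F : ℝ → ℝ := fun ρ => H.eval ρ * ρ ^ ((k : ℝ) / 2) * v (Real.sqrt ρ) with hF
  have hGcont : Continuous (fun ρ : ℝ => H.eval ρ * ρ ^ ((k : ℝ) / 2)) := by
    apply Continuous.mul
    · exact H.continuous_aeval
    · rw [continuous_iff_continuousAt]
      intro y
      exact Real.continuousAt_rpow_const y _ (Or.inr (by positivity))
  obtain ⟨M0, hM0⟩ := (isCompact_Icc (a := (0:ℝ)) (b := R ^ 2)).exists_bound_of_continuousOn
    hGcont.continuousOn
  have hsqrt_maps : Set.MapsTo Real.sqrt (Set.Ioo 0 (R ^ 2)) (Set.Ioo 0 R) := by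
    intro ρ hρ
    refine ⟨Real.sqrt_pos.mpr hρ.1, ?_⟩
    rw [show R = Real.sqrt (R ^ 2) from (Real.sqrt_sq hR.le).symm]
    exact Real.sqrt_lt_sqrt hρ.1.le hρ.2
  have hFcont : ContinuousOn F (Set.Ioo 0 (R ^ 2)) :=
    hGcont.continuousOn.mul (hvcont.comp Real.continuous_sqrt.continuousOn hsqrt_maps)
  have hvpos' : ∀ ρ ∈ Set.Ioo (0:ℝ) (R ^ 2), 0 ≤ v (Real.sqrt ρ) :=
    fun ρ hρ => hvpos _ (hsqrt_maps hρ)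
  have hInt2 : IntegrableOn F (Set.Ioo 0 (R ^ 2)) volume := by
    apply MeasureTheory.Integrable.mono (hInt1.const_mul M0)
      (hFcont.aestronglyMeasurable measurableSet_Ioo)
    filter_upwards [MeasureTheory.self_mem_ae_restrict
      (measurableSet_Ioo (a := (0:ℝ)) (b := R ^ 2))] with ρ hρ
    have h1 : ‖F ρ‖ = ‖H.eval ρ * ρ ^ ((k : ℝ) / 2)‖ * v (Real.sqrt ρ) := by
      rw [hF]
      rw [norm_mul, Real.norm_eq_abs (v _), abs_of_nonneg (hvpos' ρ hρ)]
    rw [h1]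
    refine le_trans (mul_le_mul_of_nonneg_right
      (hM0 ρ ⟨hρ.1.le, hρ.2.le⟩) (hvpos' ρ hρ)) ?_
    exact le_abs_self _
  -- pointwise bound on Ioo
  have hptwise : ∀ ρ ∈ Set.Ioo (0:ℝ) (R ^ 2), F ρ ≤ v (Real.sqrt ρ) := by
    intro ρ hρ
    have h1 : H.eval ρ ≤ ρ ^ (-(k : ℝ) / 2) := hbound ρ hρ.1
    have h2 : (0:ℝ) < ρ ^ ((k : ℝ) / 2) := Real.rpow_pos_of_pos hρ.1 _
    have h3 : H.eval ρ * ρ ^ ((k : ℝ) / 2) ≤ 1 := by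
      have := mul_le_mul_of_nonneg_right h1 h2.le
      rwa [← Real.rpow_add hρ.1, show -(k:ℝ)/2 + (k:ℝ)/2 = 0 by ring, Real.rpow_zero] at this
    calc F ρ = H.eval ρ * ρ ^ ((k : ℝ) / 2) * v (Real.sqrt ρ) := rfl
      _ ≤ 1 * v (Real.sqrt ρ) := mul_le_mul_of_nonneg_right h3 (hvpos' ρ hρ)
      _ = v (Real.sqrt ρ) := one_mul _
  -- main chain
  have hsum : ∑ j, lam j * (t j) ^ (-(k : ℝ) / 2) = ∑ j, lam j * H.eval (t j) := by
    apply Finset.sum_congr rfl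
    intro j _
    rw [hev j]
  rw [hsum, hexact H hHnat]
  have hIocIoo : (∫ ρ in (0:ℝ)..(R ^ 2), F ρ) = ∫ ρ in Set.Ioo 0 (R ^ 2), F ρ := by
    rw [intervalIntegral.integral_of_le hR2.le, MeasureTheory.integral_Ioc_eq_integral_Ioo]
  have hmono : ∫ ρ in Set.Ioo 0 (R ^ 2), F ρ ≤ ∫ ρ in Set.Ioo 0 (R ^ 2), v (Real.sqrt ρ) :=
    MeasureTheory.setIntegral_mono_on hInt2 hInt1 measurableSet_Ioo hptwise
  calc (1/2) * ∫ ρ in (0:ℝ)..(R ^ 2), H.eval ρ * ρ ^ ((k : ℝ) / 2) * v (Real.sqrt ρ)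
      = (1/2) * ∫ ρ in Set.Ioo 0 (R ^ 2), F ρ := by rw [← hF, ← hIocIoo]
    _ ≤ (1/2) * ∫ ρ in Set.Ioo 0 (R ^ 2), v (Real.sqrt ρ) := by linarith
    _ = (1/2) * (2 * ∫ r in (0:ℝ)..R, v r * r) := by rw [hIntEq]
    _ = ∫ r in (0:ℝ)..R, v r * r := by ring

end Main
end

section
/- Let g be a 2π-periodic function of class C^{2D+1} on ℝ. Then |∫_0^{2π} g(φ) dφ − T_M(g)| ≤ (4π ζ(2D+1) / M^{2D+1}) · sup_{φ ∈ [0,2π]} |g^{(2D+1)}(φ)|, where T_M(g) = (2π/M) Σ_{s=1}^M g(2πs/M) and ζ is the Riemann zeta function. -/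
open Real

open Complex intervalIntegral Set Function

lemma periodic_deriv' {f : ℝ → ℝ} {c : ℝ} (h : Function.Periodic f c) :
    Function.Periodic (deriv f) c := by
  intro x
  have hfc : (fun y : ℝ => f (y + c)) = f := funext h
  rw [← deriv_comp_add_const f c x, hfc]

lemma periodic_iteratedDeriv {f : ℝ → ℝ} {c : ℝ} (h : Function.Periodic f c) (k : ℕ) :
    Function.Periodic (iteratedDeriv k f) c := by
  induction k with
  | zero => simpa [iteratedDeriv_zero] using h
  | succ k ih => rw [iteratedDeriv_succ]; exact periodic_deriv' ih

lemma norm_fourier_apply_one {T : ℝ} (n : ℤ) (x : AddCircle T) : ‖fourier n x‖ = 1 := by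
  rw [fourier_apply]; exact Circle.norm_coe _

lemma fourierCoeffOn_norm_le {a b : ℝ} (hab : a < b) (f : ℝ → ℂ) (n : ℤ) (C : ℝ)
    (hf : ∀ x ∈ Set.Icc a b, ‖f x‖ ≤ C) :
    ‖fourierCoeffOn hab f n‖ ≤ C := by
  rw [fourierCoeffOn_eq_integral]
  rw [norm_smul]
  have h1 : ‖(1 : ℝ) / (b - a)‖ = 1 / (b - a) := by
    rw [Real.norm_eq_abs, abs_of_pos (by simp [hab] : (0:ℝ) < 1/(b-a))]
  rw [h1]
  have h2 : ‖∫ x in a..b, fourier (-n) (x : AddCircle (b - a)) • f x‖ ≤ C * |b - a| := by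
    apply intervalIntegral.norm_integral_le_of_norm_le_const
    intro x hx
    rw [norm_smul, norm_fourier_apply_one, one_mul]
    apply hf
    rcases hx with ⟨h1, h2⟩
    rw [min_eq_left hab.le] at h1
    rw [max_eq_right hab.le] at h2
    exact ⟨h1.le, h2⟩
  calc (1 / (b - a)) * ‖∫ x in a..b, fourier (-n) (x : AddCircle (b - a)) • f x‖
      ≤ (1 / (b - a)) * (C * |b - a|) := by
        exact mul_le_mul_of_nonneg_left h2 (by simp [hab.le])
    _ = C := by rw [abs_of_pos (by linarith)]; rw [one_div, inv_mul_eq_div, mul_div_assoc, div_self (sub_ne_zero.mpr hab.ne'), mul_one]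

lemma fourier_geom_sum {M : ℕ} (hM : 1 ≤ M) (n : ℤ) :
    ∑ s ∈ Finset.range M, (fourier n ((2*π*(s+1)/M : ℝ) : AddCircle (2*π)) : ℂ)
      = if (M:ℤ) ∣ n then (M:ℂ) else 0 := by
  have hMR : (M:ℝ) ≠ 0 := Nat.cast_ne_zero.mpr (by omega)
  have hMC : (M:ℂ) ≠ 0 := Nat.cast_ne_zero.mpr (by omega)
  have hπ : (π:ℝ) ≠ 0 := Real.pi_ne_zero
  set ζ : ℂ := Complex.exp (2*π*Complex.I*n/M) with hζdef
  have hterm : ∀ s : ℕ, (fourier n ((2*π*(s+1)/M : ℝ) : AddCircle (2*π)) : ℂ) = ζ^(s+1) := by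
    intro s
    rw [fourier_coe_apply, hζdef, ← Complex.exp_nat_mul]
    congr 1
    have : ((2:ℂ)*π) ≠ 0 := by
      simp [Complex.ofReal_ne_zero, hπ]
    push_cast
    field_simp
  have hzM : ζ^M = 1 := by
    rw [hζdef, ← Complex.exp_nat_mul]
    have : (M:ℂ) * (2*π*Complex.I*n/M) = n * (2*π*Complex.I) := by field_simp
    rw [this, Complex.exp_int_mul_two_pi_mul_I]
  simp_rw [hterm]
  by_cases hd : (M:ℤ) ∣ n
  · obtain ⟨k, rfl⟩ := hd
    have hz1 : ζ = 1 := by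
      rw [hζdef]
      have : (2*π*Complex.I*((M:ℤ)*k:ℤ)/M : ℂ) = k * (2*π*Complex.I) := by
        push_cast; field_simp
      rw [this, Complex.exp_int_mul_two_pi_mul_I]
    simp [hz1]
  · rw [if_neg hd]
    have hz1 : ζ ≠ 1 := by
      intro h
      rw [hζdef, Complex.exp_eq_one_iff] at h
      obtain ⟨k, hk⟩ := h
      apply hd
      refine ⟨k, ?_⟩
      have h2 : (2*π*Complex.I : ℂ) ≠ 0 := by
        simp [Complex.ofReal_ne_zero, hπ, Complex.I_ne_zero]
      field_simp at hk
      have : (n:ℂ) = (M:ℂ) * k := by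
        exact hk
      exact_mod_cast this
    have : ∑ s ∈ Finset.range M, ζ^(s+1) = ζ * ∑ s ∈ Finset.range M, ζ^s := by
      rw [Finset.mul_sum]
      exact Finset.sum_congr rfl fun s _ => by rw [pow_succ']
    rw [this, geom_sum_eq hz1, hzM, sub_self, zero_div, mul_zero]

lemma coeff_step {g : ℝ → ℝ} {p : ℕ} (hsm : ContDiff ℝ p g)
    (hper : Function.Periodic g (2*π)) {k : ℕ} (hk : k < p) {n : ℤ} (hn : n ≠ 0)
    (hab : (0:ℝ) < 0 + 2*π) :
    ‖fourierCoeffOn hab (fun x => ((iteratedDeriv k g x : ℝ) : ℂ)) n‖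
      = ‖fourierCoeffOn hab (fun x => ((iteratedDeriv (k+1) g x : ℝ) : ℂ)) n‖ / |(n:ℝ)| := by
  have hdiff : Differentiable ℝ (iteratedDeriv k g) :=
    hsm.differentiable_iteratedDeriv k (by exact_mod_cast hk)
  have hf : ∀ x ∈ Set.uIcc (0:ℝ) (0 + 2*π),
      HasDerivAt (fun x => ((iteratedDeriv k g x : ℝ) : ℂ)) (((iteratedDeriv (k+1) g x : ℝ) : ℂ)) x := by
    intro x _
    have h1 : HasDerivAt (iteratedDeriv k g) (iteratedDeriv (k+1) g x) x := by
      rw [iteratedDeriv_succ]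
      exact (hdiff x).hasDerivAt
    exact h1.ofReal_comp
  have hcont : Continuous fun x => ((iteratedDeriv (k+1) g x : ℝ) : ℂ) :=
    Complex.continuous_ofReal.comp (hsm.continuous_iteratedDeriv (k+1) (by exact_mod_cast hk))
  have hf' : IntervalIntegrable (fun x => ((iteratedDeriv (k+1) g x : ℝ) : ℂ))
      MeasureTheory.volume 0 (0 + 2*π) := hcont.intervalIntegrable _ _
  have key := fourierCoeffOn_of_hasDerivAt hab hn hf hf'
  have hbd : ((iteratedDeriv k g (0 + 2*π) : ℝ) : ℂ) - ((iteratedDeriv k g 0 : ℝ) : ℂ) = 0 := by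
    rw [periodic_iteratedDeriv hper k 0]
    ring
  rw [hbd, mul_zero, zero_sub] at key
  rw [key]
  have hπ : (0:ℝ) < π := Real.pi_pos
  rw [norm_mul, norm_neg, norm_mul]
  have h1 : ‖(1 : ℂ) / (-2 * π * Complex.I * n)‖ = 1 / (2*π*|(n:ℝ)|) := by
    rw [norm_div, norm_one]
    congr 1
    simp only [norm_mul, norm_neg, Complex.norm_I]
    rw [Complex.norm_ofNat]
    rw [Complex.norm_real, Complex.norm_intCast]
    rw [Real.norm_eq_abs, abs_of_pos hπ]
    push_cast
    ring
  have h2 : ‖((0:ℝ) + 2*π - 0 : ℝ) • (1:ℂ)‖ = 2*π := by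
    simp [abs_of_pos hπ]
  have h3 : ‖((0 + 2*π : ℝ) : ℂ) - ((0:ℝ):ℂ)‖ = 2*π := by
    have : ((0 + 2*π : ℝ) : ℂ) - ((0:ℝ):ℂ) = ((2*π : ℝ) : ℂ) := by push_cast; ring
    rw [this, Complex.norm_real, Real.norm_eq_abs, abs_of_pos (by linarith)]
  rw [h1, h3]
  have hnn : (0:ℝ) < |(n:ℝ)| := by
    rw [abs_pos]
    exact_mod_cast hn
  field_simp

lemma coeff_decay {g : ℝ → ℝ} {p : ℕ} (hsm : ContDiff ℝ p g)
    (hper : Function.Periodic g (2*π)) {C : ℝ}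
    (hC : ∀ φ ∈ Set.Icc (0:ℝ) (2 * π), |iteratedDeriv p g φ| ≤ C)
    (hab : (0:ℝ) < 0 + 2*π) {n : ℤ} (hn : n ≠ 0) :
    ‖fourierCoeffOn hab (fun x => ((g x : ℝ) : ℂ)) n‖ ≤ C / |(n:ℝ)|^p := by
  have hnn : (0:ℝ) < |(n:ℝ)| := by rw [abs_pos]; exact_mod_cast hn
  have main : ∀ j, j ≤ p →
      ‖fourierCoeffOn hab (fun x => ((iteratedDeriv (p - j) g x : ℝ) : ℂ)) n‖ ≤ C / |(n:ℝ)|^j := by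
    intro j
    induction j with
    | zero =>
      intro _
      simp only [Nat.sub_zero, pow_zero, div_one]
      apply fourierCoeffOn_norm_le
      intro x hx
      rw [Complex.norm_real, Real.norm_eq_abs]
      apply hC
      rw [zero_add] at hx
      exact hx
    | succ j ih =>
      intro hj
      have hk : p - (j+1) < p := by omega
      have heq : p - (j+1) + 1 = p - j := by omega
      rw [coeff_step hsm hper hk hn hab, heq]
      calc ‖fourierCoeffOn hab (fun x => ((iteratedDeriv (p - j) g x : ℝ) : ℂ)) n‖ / |(n:ℝ)|
          ≤ (C / |(n:ℝ)|^j) / |(n:ℝ)| := by gcongr; exact ih (by omega)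
        _ = C / |(n:ℝ)|^(j+1) := by rw [div_div, pow_succ]
  have := main p le_rfl
  simpa using this

set_option maxHeartbeats 1000000 in
/-- Trapezoidal-rule error estimate for smooth `2π`-periodic functions:
`|∫_0^{2π} g − T_M(g)| ≤ 4π ζ(2D+1) M^{−(2D+1)} · sup |g^{(2D+1)}|`. -/
theorem trapezoidal_error_estimate (D M : ℕ) (hD : 1 ≤ D) (hM : 1 ≤ M)
    (g : ℝ → ℝ) (hper : ∀ x : ℝ, g (x + 2 * π) = g x)
    (hsm : ContDiff ℝ (2 * D + 1) g)
    (C : ℝ) (hC : ∀ φ ∈ Set.Icc (0:ℝ) (2 * π), |iteratedDeriv (2 * D + 1) g φ| ≤ C) :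
    |(∫ φ in (0:ℝ)..(2 * π), g φ)
        - (2 * π / M) * ∑ s ∈ Finset.range M, g (2 * π * (s + 1) / M)|
      ≤ (4 * π * (∑' n : ℕ, (1 : ℝ) / (n + 1) ^ (2 * D + 1)) / M ^ (2 * D + 1)) * C := by
  have hπ : (0:ℝ) < π := Real.pi_pos
  haveI hT : Fact ((0:ℝ) < 2*π) := ⟨by linarith⟩
  set p : ℕ := 2*D + 1 with hpdef
  have hp1 : 1 < p := by omega
  have hsm' : ContDiff ℝ (p : ℕ∞) g := by exact_mod_cast hsm
  have hperiodic : Function.Periodic g (2*π) := hper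
  have hMR : (0:ℝ) < (M:ℝ) := by exact_mod_cast Nat.pos_of_ne_zero (by omega)
  have hMC : (M:ℂ) ≠ 0 := Nat.cast_ne_zero.mpr (by omega)
  have hMZ : (M:ℤ) ≠ 0 := by exact_mod_cast (by omega : M ≠ 0)
  have hC0 : (0:ℝ) ≤ C := le_trans (abs_nonneg _) (hC 0 ⟨le_refl 0, by positivity⟩)
  set f : ℝ → ℂ := fun x => ((g x : ℝ) : ℂ) with hfdef
  have hab : (0:ℝ) < 0 + 2*π := by linarith
  -- the lifted function
  have hf02 : f 0 = f (2*π) := by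
    have := hper 0
    rw [zero_add] at this
    simp [hfdef, this]
  have hcontf : ContinuousOn f (Set.Icc 0 (2*π)) :=
    (Complex.continuous_ofReal.comp hsm'.continuous).continuousOn
  set F : C(AddCircle (2*π), ℂ) :=
    ⟨AddCircle.liftIco (2*π) 0 f, AddCircle.liftIco_zero_continuous hf02 hcontf⟩ with hFdef
  have hFx : ∀ x : ℝ, F ((x : ℝ) : AddCircle (2*π)) = f x := by
    intro x
    have h2π : (0:ℝ) < 2*π := by linarith
    have hy := toIcoMod_mem_Ico h2π 0 x
    have hcoe : ((x : ℝ) : AddCircle (2*π)) = ((toIcoMod h2π 0 x : ℝ) : AddCircle (2*π)) := by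
      symm
      apply (QuotientAddGroup.eq_iff_sub_mem).mpr
      rw [toIcoMod]
      refine ⟨-(toIcoDiv h2π 0 x), ?_⟩
      simp [sub_eq_add_neg]
    show AddCircle.liftIco (2*π) 0 f _ = f x
    rw [hcoe, AddCircle.liftIco_coe_apply hy]
    simp only [hfdef]
    congr 1
    rw [toIcoMod]
    exact hperiodic.sub_zsmul_eq _
  set c : ℤ → ℂ := fun n => fourierCoeff (F : AddCircle (2*π) → ℂ) n with hcdef
  have hcoeq : ∀ n, c n = fourierCoeffOn hab f n := fun n => fourierCoeff_liftIco_eq f n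
  have hdecay : ∀ n : ℤ, n ≠ 0 → ‖c n‖ ≤ C / |(n:ℝ)|^p := by
    intro n hn
    rw [hcoeq]
    exact coeff_decay hsm' hperiodic hC hab hn
  have hsummable : Summable c := by
    apply Summable.of_norm_bounded_eventually (g := fun n : ℤ => C * |1 / (n:ℝ)^p|)
      (((summable_one_div_int_pow.mpr hp1).abs).mul_left C)
    rw [Filter.eventually_cofinite]
    apply Set.Finite.subset (Set.finite_singleton (0:ℤ))
    intro n hn
    simp only [Set.mem_setOf_eq, not_le] at hn
    by_contra hne
    have hne' : n ≠ 0 := by simpa using hne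
    have h1 := hdecay n hne'
    have h2 : C * |1 / (n:ℝ)^p| = C / |(n:ℝ)|^p := by
      rw [abs_div, abs_one, _root_.abs_pow, mul_one_div]
    rw [h2] at hn
    exact absurd h1 (not_le.mpr hn)
  have hps : ∀ x : AddCircle (2*π), HasSum (fun i => c i • fourier i x) (F x) :=
    fun x => has_pointwise_sum_fourier_series_of_summable hsummable x
  -- c 0 and the integral
  have hc0 : ((2*π : ℝ) : ℂ) * c 0 = (((∫ φ in (0:ℝ)..(2*π), g φ) : ℝ) : ℂ) := by
    rw [hcoeq, fourierCoeffOn_eq_integral]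
    simp only [neg_zero, fourier_zero, one_smul, zero_add, sub_zero]
    rw [intervalIntegral.integral_ofReal]
    rw [real_smul]
    push_cast
    rw [← mul_assoc]
    rw [mul_one_div, div_self (by simp [Complex.ofReal_ne_zero, Real.pi_ne_zero] : ((2:ℂ)*(π:ℝ)) ≠ 0), one_mul]
  -- trapezoid sum via Fourier series
  set A : ℂ := ∑ s ∈ Finset.range M, f (2*π*((s:ℝ)+1)/M) with hAdef
  have hsumA : HasSum (fun i : ℤ => c i * (if (M:ℤ) ∣ i then (M:ℂ) else 0)) A := by
    have h1 : ∀ s ∈ Finset.range M, HasSum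
        (fun i : ℤ => c i • fourier i ((2*π*((s:ℝ)+1)/M : ℝ) : AddCircle (2*π)))
        (f (2*π*((s:ℝ)+1)/M)) := by
      intro s _
      have := hps ((2*π*((s:ℝ)+1)/M : ℝ) : AddCircle (2*π))
      rwa [hFx] at this
    have h2 := hasSum_sum h1
    convert h2 using 1
    funext i
    rw [← fourier_geom_sum hM i, Finset.mul_sum]
    exact Finset.sum_congr rfl fun s _ => (smul_eq_mul _ _).symm
  have hmult : HasSum (fun k : ℤ => c (k * M) * M) A := by
    have hinj : Function.Injective (fun k : ℤ => k * (M:ℤ)) := fun a b h => by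
      exact mul_right_cancel₀ hMZ h
    have hvanish : ∀ i : ℤ, i ∉ Set.range (fun k : ℤ => k * (M:ℤ)) →
        c i * (if (M:ℤ) ∣ i then (M:ℂ) else 0) = 0 := by
      intro i hi
      rw [if_neg, mul_zero]
      intro hdvd
      obtain ⟨l, rfl⟩ := hdvd
      exact hi ⟨l, mul_comm l (M:ℤ)⟩
    have heq : (fun k : ℤ => c (k * M) * M)
        = (fun i : ℤ => c i * (if (M:ℤ) ∣ i then (M:ℂ) else 0)) ∘ (fun k : ℤ => k * (M:ℤ)) := by
      funext k
      simp only [Function.comp_apply, if_pos (dvd_mul_left (M:ℤ) k)]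
    rw [heq]
    exact (hinj.hasSum_iff hvanish).mpr hsumA
  -- decompose the sum over ℤ
  have hinj_u : Function.Injective (fun n : ℕ => ((n:ℤ)+1)*M) := by
    intro a b h
    simp only at h
    have := mul_right_cancel₀ hMZ h
    omega
  have hinj_v : Function.Injective (fun n : ℕ => -(((n:ℤ)+1))*M) := by
    intro a b h
    simp only at h
    have := mul_right_cancel₀ hMZ h
    omega
  have hsum_u : Summable (fun n : ℕ => c (((n:ℤ)+1)*M)) := hsummable.comp_injective hinj_u
  have hsum_v : Summable (fun n : ℕ => c (-(((n:ℤ)+1))*M)) := hsummable.comp_injective hinj_v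
  set P : ℂ := ∑' n : ℕ, c (((n:ℤ)+1)*M) with hPdef
  set Q : ℂ := ∑' n : ℕ, c (-(((n:ℤ)+1))*M) with hQdef
  have hposs : HasSum (fun n : ℕ => c ((n:ℤ)*M)) (P + c 0) := by
    have hshift : HasSum (fun n : ℕ => c (((n + 1 : ℕ):ℤ)*M)) P := by
      have : (fun n : ℕ => c (((n + 1 : ℕ):ℤ)*M)) = fun n : ℕ => c (((n:ℤ)+1)*M) := by
        funext n; push_cast; ring_nf
      rw [this]
      exact hsum_u.hasSum
    have h3 := (hasSum_nat_add_iff (f := fun n : ℕ => c ((n:ℤ)*M)) 1).mp hshift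
    simpa using h3
  have hnegs : HasSum (fun n : ℕ => c ((-((n:ℤ)+1))*M)) Q := by
    have : (fun n : ℕ => c ((-((n:ℤ)+1))*M)) = fun n : ℕ => c (-(((n:ℤ)+1))*M) := by
      funext n; ring_nf
    rw [this]
    exact hsum_v.hasSum
  have hZsum : HasSum (fun k : ℤ => c (k*M)) ((P + c 0) + Q) := by
    apply HasSum.of_nat_of_neg_add_one hposs
    exact hnegs
  have hAeq : A = ((P + c 0) + Q) * M := hmult.unique (hZsum.mul_right (M:ℂ))
  -- error identity
  have hA' : ((∑ s ∈ Finset.range M, g (2*π*((s:ℝ)+1)/(M:ℝ)) : ℝ) : ℂ) = A := by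
    rw [hAdef]
    push_cast
    rfl
  have hcancel : (((2*π/(M:ℝ) : ℝ)):ℂ) * A = ((2*π:ℝ):ℂ) * ((P + c 0) + Q) := by
    rw [hAeq]
    push_cast
    field_simp
  have hE : ((((∫ φ in (0:ℝ)..(2*π), g φ)
        - (2*π/(M:ℝ)) * ∑ s ∈ Finset.range M, g (2*π*((s:ℝ)+1)/(M:ℝ))) : ℝ) : ℂ)
      = -(((2*π:ℝ):ℂ)) * (P + Q) := by
    rw [Complex.ofReal_sub, Complex.ofReal_mul, hA', hcancel]
    linear_combination -hc0
  -- norm bounds for the tails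
  have hbu : ∀ n : ℕ, ‖c (((n:ℤ)+1)*M)‖ ≤ C / (((n:ℝ)+1)*M)^p := by
    intro n
    have hne : ((n:ℤ)+1)*(M:ℤ) ≠ 0 := mul_ne_zero (by omega) hMZ
    have h1 := hdecay _ hne
    have habs : |(((((n:ℤ)+1)*(M:ℤ)) : ℤ):ℝ)| = ((n:ℝ)+1)*M := by
      push_cast
      rw [abs_of_pos (by positivity)]
    rwa [habs] at h1
  have hbv : ∀ n : ℕ, ‖c (-(((n:ℤ)+1))*M)‖ ≤ C / (((n:ℝ)+1)*M)^p := by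
    intro n
    have hne : (-(((n:ℤ)+1)))*(M:ℤ) ≠ 0 := mul_ne_zero (by omega) hMZ
    have h1 := hdecay _ hne
    have habs : |((((-(((n:ℤ)+1)))*(M:ℤ)) : ℤ):ℝ)| = ((n:ℝ)+1)*M := by
      push_cast
      rw [show (-((n:ℝ)+1))*(M:ℝ) = -(((n:ℝ)+1)*(M:ℝ)) by ring, abs_neg, abs_of_pos (by positivity)]
    rwa [habs] at h1
  have hBsum : Summable (fun n : ℕ => C / (((n:ℝ)+1)*M)^p) := by
    have h1 : Summable (fun n : ℕ => 1 / ((n:ℝ)+1)^p) := by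
      have h := (summable_nat_add_iff (f := fun n : ℕ => 1 / (n:ℝ)^p) 1).mpr
        (summable_one_div_nat_pow.mpr hp1)
      apply h.congr
      intro n
      push_cast
      ring
    have heq : (fun n : ℕ => C / (((n:ℝ)+1)*M)^p)
        = fun n : ℕ => (C/(M:ℝ)^p) * (1 / ((n:ℝ)+1)^p) := by
      funext n
      rw [mul_pow]
      rw [mul_one_div, div_div]
      ring_nf
    rw [heq]
    exact h1.mul_left _
  have hsum_un : Summable (fun n : ℕ => ‖c (((n:ℤ)+1)*M)‖) :=
    Summable.of_nonneg_of_le (fun n => norm_nonneg _) hbu hBsum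
  have hsum_vn : Summable (fun n : ℕ => ‖c (-(((n:ℤ)+1))*M)‖) :=
    Summable.of_nonneg_of_le (fun n => norm_nonneg _) hbv hBsum
  have hPb : ‖P‖ ≤ ∑' n : ℕ, C / (((n:ℝ)+1)*M)^p :=
    (norm_tsum_le_tsum_norm hsum_un).trans (Summable.tsum_le_tsum hbu hsum_un hBsum)
  have hQb : ‖Q‖ ≤ ∑' n : ℕ, C / (((n:ℝ)+1)*M)^p :=
    (norm_tsum_le_tsum_norm hsum_vn).trans (Summable.tsum_le_tsum hbv hsum_vn hBsum)
  have hBeq : (∑' n : ℕ, C / (((n:ℝ)+1)*M)^p)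
      = (C/(M:ℝ)^p) * ∑' n : ℕ, (1:ℝ)/((n:ℝ)+1)^p := by
    rw [← tsum_mul_left]
    congr 1
    funext n
    rw [mul_pow, mul_one_div, div_div]
    ring_nf
  -- conclude
  have habs : |(∫ φ in (0:ℝ)..(2*π), g φ)
        - (2*π/(M:ℝ)) * ∑ s ∈ Finset.range M, g (2*π*((s:ℝ)+1)/(M:ℝ))|
      = ‖((((∫ φ in (0:ℝ)..(2*π), g φ)
        - (2*π/(M:ℝ)) * ∑ s ∈ Finset.range M, g (2*π*((s:ℝ)+1)/(M:ℝ))) : ℝ) : ℂ)‖ := by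
    rw [Complex.norm_real, Real.norm_eq_abs]
  rw [habs, hE]
  have hnorm : ‖-(((2*π:ℝ):ℂ)) * (P + Q)‖ = (2*π) * ‖P + Q‖ := by
    rw [norm_mul, norm_neg, Complex.norm_real, Real.norm_eq_abs, abs_of_pos (by linarith)]
  rw [hnorm]
  calc (2*π) * ‖P + Q‖ ≤ (2*π) * (‖P‖ + ‖Q‖) := by
        gcongr
        exact norm_add_le _ _
    _ ≤ (2*π) * ((∑' n : ℕ, C / (((n:ℝ)+1)*M)^p) + (∑' n : ℕ, C / (((n:ℝ)+1)*M)^p)) := by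
        gcongr
    _ = (4 * π * (∑' n : ℕ, (1 : ℝ) / ((n:ℝ) + 1) ^ p) / (M:ℝ) ^ p) * C := by
        rw [hBeq]
        ring
end
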